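/- Let n ≥ 2 and let M be the set of real symmetric n×n matrices having a multiple eigenvalue. Then the vanishing ideal of M is prime: the ideal { p ∈ MvPolynomial ((Fin n) × (Fin n)) ℝ | for every A ∈ M, evaluating p at the point (i,j) ↦ A i j gives 0 } is a prime ideal of the polynomial ring. (The discriminant surface M is an algebraically prime variety.) -/

import Mathlib

open Matrix

/-- The set of real symmetric n×n matrices having a multiple eigenvalue. -/
def discSurface (n : ℕ) : Set (Matrix (Fin n) (Fin n) ℝ) :=
  {A | A.IsSymm ∧ ∃ c : ℝ, (Polynomial.X - Polynomial.C c) ^ 2 ∣ A.charpoly}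

/-- The ideal of all polynomials in the matrix entries vanishing on a set of
matrices. -/
noncomputable def vanishingIdealOf (n : ℕ) (S : Set (Matrix (Fin n) (Fin n) ℝ)) :
    Ideal (MvPolynomial (Fin n × Fin n) ℝ) where
  carrier := {p | ∀ A ∈ S, MvPolynomial.eval (fun q => A q.1 q.2) p = 0}
  add_mem' := by
    intro a b ha hb A hA
    simp [ha A hA, hb A hA]
  zero_mem' := by intro A hA; simp
  smul_mem' := by
    intro c p hp A hA
    simp [smul_eq_mul, hp A hA]

namespace DiscAux

open Polynomial

variable {n m : ℕ}

/-- Scaled Householder reflection: `(v⬝v)•1 - 2•vvᵀ`, polynomial in `v`. -/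
def hh {R : Type*} [CommRing R] (v : Fin n → R) : Matrix (Fin n) (Fin n) R :=
  (v ⬝ᵥ v) • (1 : Matrix (Fin n) (Fin n) R) - (2 : R) • vecMulVec v v

/-- Genuine Householder reflection. -/
noncomputable def reflR (v : Fin n → ℝ) : Matrix (Fin n) (Fin n) ℝ :=
  1 - (2 / (v ⬝ᵥ v)) • vecMulVec v v

def bigN {R : Type*} [CommRing R] (w : Fin m → Fin n → R) : Matrix (Fin n) (Fin n) R :=
  (List.ofFn fun k => hh (w k)).prod

def psiM {R : Type*} [CommRing R] (w : Fin m → Fin n → R) (d : Fin n → R) :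
    Matrix (Fin n) (Fin n) R :=
  bigN w * diagonal d * (bigN w)ᵀ

section maps

variable {R S : Type*} [CommRing R] [CommRing S] (f : R →+* S)

lemma dot_map (v w : Fin n → R) : f (v ⬝ᵥ w) = (f ∘ v) ⬝ᵥ (f ∘ w) := by
  simp [dotProduct, map_sum]

lemma hh_map (v : Fin n → R) : (hh v).map f = hh (f ∘ v) := by
  ext i j
  show f ((v ⬝ᵥ v) * (1 : Matrix (Fin n) (Fin n) R) i j - 2 * (v i * v j))
      = ((f ∘ v) ⬝ᵥ (f ∘ v)) * (1 : Matrix (Fin n) (Fin n) S) i j - 2 * (f (v i) * f (v j))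
  rw [map_sub, f.map_mul, f.map_mul, f.map_mul, dot_map, map_ofNat]
  congr 1
  congr 1
  rcases eq_or_ne i j with h | h
  · rw [h, Matrix.one_apply_eq, Matrix.one_apply_eq, f.map_one]
  · rw [Matrix.one_apply_ne h, Matrix.one_apply_ne h, f.map_zero]

lemma bigN_map (w : Fin m → Fin n → R) :
    (bigN w).map f = bigN (fun k => f ∘ w k) := by
  have h0 : (bigN w).map f = f.mapMatrix (bigN w) := rfl
  rw [h0, bigN, map_list_prod]
  simp only [List.map_ofFn, bigN]
  have h1 : (⇑f.mapMatrix ∘ fun k => hh (w k)) = fun k => hh (f ∘ w k) :=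
    funext fun k => hh_map f (w k)
  rw [h1]

lemma psiM_map (w : Fin m → Fin n → R) (d : Fin n → R) :
    (psiM w d).map f = psiM (fun k => f ∘ w k) (f ∘ d) := by
  rw [psiM, psiM, Matrix.map_mul, Matrix.map_mul, bigN_map, Matrix.transpose_map, bigN_map]
  rw [Matrix.diagonal_map (map_zero f)]
  rfl

end maps

section charpoly

variable {R : Type*} [CommRing R]

lemma charpoly_diagonal (d : Fin n → R) :
    (diagonal d).charpoly = ∏ i, (X - C (d i)) := by
  rw [Matrix.charpoly]
  have : charmatrix (diagonal d) = diagonal (fun i => (X : R[X]) - C (d i)) := by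
    ext i j
    rcases eq_or_ne i j with h | h
    · subst h; simp
    · simp [h, diagonal_apply_ne _ h]
  rw [this, det_diagonal]

lemma charpoly_conj (Q B : Matrix (Fin n) (Fin n) R) (hQ : Q * Qᵀ = 1) :
    (Q * B * Qᵀ).charpoly = B.charpoly := by
  classical
  set mc : Matrix (Fin n) (Fin n) R →+* Matrix (Fin n) (Fin n) R[X] :=
    (C : R →+* R[X]).mapMatrix with hmc
  have hcm : ∀ M : Matrix (Fin n) (Fin n) R,
      charmatrix M = Matrix.scalar (Fin n) (X : R[X]) - mc M := fun _ => rfl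
  have key : charmatrix (Q * B * Qᵀ) = mc Q * charmatrix B * mc Qᵀ := by
    rw [hcm, hcm, mul_sub, sub_mul]
    congr 1
    · have hc : Matrix.scalar (Fin n) (X : R[X]) * mc Qᵀ = mc Qᵀ * Matrix.scalar (Fin n) X :=
        (Matrix.scalar_commute (X : R[X]) (fun r' => Commute.all _ _) (mc Qᵀ)).eq
      rw [mul_assoc, hc, ← mul_assoc, ← mc.map_mul, hQ, mc.map_one, one_mul]
    · rw [← mc.map_mul, ← mc.map_mul]
  have h3 : (mc Q).det * (mc Qᵀ).det = 1 := by
    rw [← det_mul, ← mc.map_mul, hQ, mc.map_one, det_one]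
  rw [Matrix.charpoly, Matrix.charpoly, key, det_mul, det_mul, mul_right_comm, h3, one_mul]

end charpoly
section realstuff

open Polynomial

variable {n m : ℕ}

lemma dot_self_pos {v : Fin n → ℝ} (hv : v ≠ 0) : 0 < v ⬝ᵥ v := by
  rcases lt_or_eq_of_le (Finset.sum_nonneg fun i _ => mul_self_nonneg (v i)) with h | h
  · exact h
  · exact absurd (dotProduct_self_eq_zero.mp h.symm) hv

lemma vecMulVec_mul_vecMulVec (v : Fin n → ℝ) :
    vecMulVec v v * vecMulVec v v = (v ⬝ᵥ v) • vecMulVec v v := by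
  ext i j
  simp only [Matrix.mul_apply, vecMulVec_apply, Matrix.smul_apply, smul_eq_mul,
    dotProduct, Finset.sum_mul]
  exact Finset.sum_congr rfl fun k _ => by ring

lemma reflR_transpose (v : Fin n → ℝ) : (reflR v)ᵀ = reflR v := by
  rw [reflR, transpose_sub, transpose_one, transpose_smul]
  congr 1
  ext i j
  simp [vecMulVec_apply, mul_comm]

lemma reflR_mul_self {v : Fin n → ℝ} (hv : v ≠ 0) : reflR v * reflR v = 1 := by
  have h := (dot_self_pos hv).ne'
  have hc : 2 / (v ⬝ᵥ v) * (2 / (v ⬝ᵥ v)) * (v ⬝ᵥ v) = 2 / (v ⬝ᵥ v) + 2 / (v ⬝ᵥ v) := by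
    field_simp
    ring
  rw [reflR, sub_mul, one_mul, mul_sub, mul_one, Matrix.smul_mul, Matrix.mul_smul,
    vecMulVec_mul_vecMulVec, smul_smul, smul_smul, hc, add_smul]
  abel

lemma hh_eq_real {v : Fin n → ℝ} (hv : v ≠ 0) : hh v = (v ⬝ᵥ v) • reflR v := by
  have h := (dot_self_pos hv).ne'
  rw [reflR, smul_sub, smul_smul, hh]
  congr 2
  field_simp

lemma hh_zero' : hh (0 : Fin n → ℝ) = 0 := by
  ext i j
  simp [hh, vecMulVec_apply]

lemma reflR_det {v : Fin n → ℝ} (hv : v ≠ 0) : (reflR v).det = -1 := by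
  have h := (dot_self_pos hv).ne'
  have e : reflR v = 1 + replicateCol (Fin 1) ((-(2 / (v ⬝ᵥ v))) • v) * replicateRow (Fin 1) v := by
    rw [reflR, vecMulVec_eq (Fin 1)]
    ext i j
    simp only [Matrix.add_apply, Matrix.sub_apply, Matrix.smul_apply, Matrix.mul_apply,
      Matrix.replicateCol_apply, Matrix.replicateRow_apply, Pi.smul_apply, smul_eq_mul]
    simp only [Finset.univ_unique, Finset.sum_singleton]
    ring
  erw [e, det_one_add_replicateCol_mul_replicateRow]
  have : v ⬝ᵥ (-(2 / (v ⬝ᵥ v))) • v = -(2 / (v ⬝ᵥ v)) * (v ⬝ᵥ v) := dotProduct_smul _ _ _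
  rw [this]
  field_simp
  ring

lemma prod_orth (l : List (Matrix (Fin n) (Fin n) ℝ)) (h : ∀ M ∈ l, Mᵀ * M = 1) :
    (l.prod)ᵀ * l.prod = 1 := by
  induction l with
  | nil => simp
  | cons a t ih =>
    simp only [List.prod_cons, transpose_mul]
    rw [mul_assoc, ← mul_assoc aᵀ, h a (List.mem_cons_self), one_mul,
      ih fun M hM => h M (List.mem_cons_of_mem a hM)]

lemma prod_hh (l : List (Fin n → ℝ)) (h : ∀ v ∈ l, v ≠ 0) :
    (l.map hh).prod = ((l.map fun v => v ⬝ᵥ v).prod) • (l.map reflR).prod := by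
  induction l with
  | nil => simp
  | cons a t ih =>
    simp only [List.map_cons, List.prod_cons]
    rw [hh_eq_real (h a (List.mem_cons_self)),
      ih fun v hv => h v (List.mem_cons_of_mem a hv), smul_mul_smul_comm]

lemma zero_mem (hn : 2 ≤ n) : (0 : Matrix (Fin n) (Fin n) ℝ) ∈ discSurface n := by
  refine ⟨by simp [Matrix.IsSymm], 0, ?_⟩
  have h0 : (0 : Matrix (Fin n) (Fin n) ℝ) = diagonal (fun _ => 0) := by simp
  rw [h0, charpoly_diagonal]
  simp only [map_zero, sub_zero, Finset.prod_const, Finset.card_univ, Fintype.card_fin]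
  exact pow_dvd_pow X hn

lemma psiM_mem (hn : 2 ≤ n) {i0 i1 : Fin n} (h01 : i0 ≠ i1) (w : Fin m → Fin n → ℝ)
    (d : Fin n → ℝ) (hd : d i0 = d i1) : psiM w d ∈ discSurface n := by
  have hsymm : (psiM w d).IsSymm := by
    show (psiM w d)ᵀ = psiM w d
    rw [psiM, transpose_mul, transpose_mul, transpose_transpose, diagonal_transpose, mul_assoc]
  by_cases hz : ∃ k, w k = 0
  · obtain ⟨k, hk⟩ := hz
    have hb : bigN w = 0 := by
      refine List.prod_eq_zero (List.mem_ofFn.mpr ⟨k, ?_⟩)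
      show hh (w k) = 0
      rw [hk, hh_zero']
    have : psiM w d = 0 := by rw [psiM, hb, zero_mul, zero_mul]
    rw [this]
    exact zero_mem hn
  · push_neg at hz
    set l := List.ofFn w with hldef
    have hl : ∀ v ∈ l, v ≠ 0 := by
      intro v hv
      obtain ⟨k, rfl⟩ := List.mem_ofFn.mp hv
      exact hz k
    have hNl : bigN w = (l.map hh).prod := by
      rw [bigN, hldef, List.map_ofFn]
      rfl
    set s : ℝ := (l.map fun v => v ⬝ᵥ v).prod with hsdef
    have hs : 0 < s := by
      refine List.prod_pos ?_
      intro a ha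
      obtain ⟨v, hv, rfl⟩ := List.mem_map.mp ha
      exact dot_self_pos (hl v hv)
    set Q := (l.map reflR).prod with hQdef
    have hQ : Qᵀ * Q = 1 := by
      refine prod_orth _ ?_
      intro M hM
      obtain ⟨v, hv, rfl⟩ := List.mem_map.mp hM
      rw [reflR_transpose]
      exact reflR_mul_self (hl v hv)
    have hQ' : Q * Qᵀ = 1 := mul_eq_one_comm.mp hQ
    have hN : bigN w = s • Q := by rw [hNl, prod_hh l hl]
    refine ⟨hsymm, s ^ 2 * d i0, ?_⟩
    have hA : psiM w d = Q * (diagonal fun i => s ^ 2 * d i) * Qᵀ := by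
      have h1 : (fun i => s ^ 2 * d i) = (s ^ 2) • d := by funext i; simp [smul_eq_mul]
      calc psiM w d = (s • Q) * diagonal d * (s • Q)ᵀ := by rw [psiM, hN]
        _ = (s * s) • (Q * diagonal d * Qᵀ) := by
            rw [transpose_smul, Matrix.smul_mul, Matrix.smul_mul, Matrix.mul_smul, smul_smul]
        _ = Q * (diagonal fun i => s ^ 2 * d i) * Qᵀ := by
            rw [h1, diagonal_smul, Matrix.mul_smul, Matrix.smul_mul, sq]
    rw [hA, charpoly_conj _ _ hQ', charpoly_diagonal]
    have hx : (X - C (s ^ 2 * d i0)) ^ 2 = ∏ i ∈ ({i0, i1} : Finset (Fin n)),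
        (X - C (s ^ 2 * d i)) := by
      rw [Finset.prod_pair h01, ← hd, sq]
    rw [hx]
    exact Finset.prod_dvd_prod_of_subset _ _ _ (Finset.subset_univ _)

end realstuff
section CD

variable {n : ℕ}

lemma orth_dot {Q : Matrix (Fin n) (Fin n) ℝ} (hQ : Qᵀ * Q = 1) (a b : Fin n → ℝ) :
    (Q *ᵥ a) ⬝ᵥ (Q *ᵥ b) = a ⬝ᵥ b := by
  rw [Matrix.dotProduct_mulVec, ← Matrix.mulVec_transpose, Matrix.mulVec_mulVec, hQ,
    Matrix.one_mulVec]

lemma vecMulVec_mulVec (v w y : Fin n → ℝ) : vecMulVec v w *ᵥ y = (w ⬝ᵥ y) • v := by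
  ext i
  simp only [Matrix.mulVec, dotProduct, vecMulVec_apply, Pi.smul_apply, smul_eq_mul,
    Finset.sum_mul]
  exact Finset.sum_congr rfl fun k _ => by ring

lemma reflR_mulVec (v y : Fin n → ℝ) :
    reflR v *ᵥ y = y - (2 / (v ⬝ᵥ v) * (v ⬝ᵥ y)) • v := by
  rw [reflR, Matrix.sub_mulVec, Matrix.one_mulVec, Matrix.smul_mulVec, vecMulVec_mulVec,
    smul_smul]

lemma eq_one_of_mulVec_id {Q : Matrix (Fin n) (Fin n) ℝ} (h : ∀ y, Q *ᵥ y = y) : Q = 1 := by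
  ext i j
  have h1 := congrFun (h (Pi.single j 1)) i
  rw [Matrix.mulVec_single_one] at h1
  simp only [Matrix.col_apply] at h1
  rw [Matrix.one_apply, h1, Pi.single_apply]

lemma mem_fix {Q : Matrix (Fin n) (Fin n) ℝ} {y : Fin n → ℝ} :
    y ∈ LinearMap.ker (Q - 1).mulVecLin ↔ Q *ᵥ y = y := by
  rw [LinearMap.mem_ker, Matrix.mulVecLin_apply, Matrix.sub_mulVec, Matrix.one_mulVec,
    sub_eq_zero]

lemma cd_aux : ∀ (m : ℕ) (Q : Matrix (Fin n) (Fin n) ℝ), Qᵀ * Q = 1 →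
    n ≤ m + Module.finrank ℝ (LinearMap.ker (Q - 1).mulVecLin) →
    ∃ L : List (Fin n → ℝ), L.length ≤ m ∧ (∀ v ∈ L, v ≠ 0) ∧ Q = (L.map reflR).prod := by
  intro m
  induction m with
  | zero =>
    intro Q hQ hrank
    have htop : LinearMap.ker (Q - 1).mulVecLin = ⊤ := by
      apply Submodule.eq_top_of_finrank_eq
      have h1 : Module.finrank ℝ (LinearMap.ker (Q - 1).mulVecLin)
          ≤ Module.finrank ℝ (Fin n → ℝ) := Submodule.finrank_le _
      have h2 : Module.finrank ℝ (Fin n → ℝ) = n := by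
        rw [Module.finrank_pi, Fintype.card_fin]
      omega
    refine ⟨[], le_refl 0, by simp, ?_⟩
    rw [List.map_nil, List.prod_nil]
    apply eq_one_of_mulVec_id
    intro y
    exact mem_fix.mp (htop ▸ Submodule.mem_top)
  | succ m ih =>
    intro Q hQ hrank
    by_cases hone : Q = 1
    · exact ⟨[], by simp, by simp, by simp [hone]⟩
    · have hx : ∃ x, Q *ᵥ x ≠ x := by
        by_contra hc
        push_neg at hc
        exact hone (eq_one_of_mulVec_id hc)
      obtain ⟨x, hx⟩ := hx
      set v := Q *ᵥ x - x with hv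
      have hv0 : v ≠ 0 := sub_ne_zero.mpr hx
      set H := reflR v with hH
      have hHH : H * H = 1 := reflR_mul_self hv0
      have hHQ : (H * Q)ᵀ * (H * Q) = 1 := by
        rw [transpose_mul, hH, reflR_transpose, ← hH, mul_assoc, ← mul_assoc H, hHH, one_mul, hQ]
      have hdot : ∀ a b, (Q *ᵥ a) ⬝ᵥ (Q *ᵥ b) = a ⬝ᵥ b := orth_dot hQ
      have hvv : v ⬝ᵥ v = 2 * (x ⬝ᵥ x - x ⬝ᵥ (Q *ᵥ x)) := by
        rw [hv, sub_dotProduct, dotProduct_sub, dotProduct_sub, hdot x x,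
          dotProduct_comm (Q *ᵥ x) x]
        ring
      have hne : x ⬝ᵥ x - x ⬝ᵥ (Q *ᵥ x) ≠ 0 := by
        intro h0
        apply hv0
        apply dotProduct_self_eq_zero.mp
        rw [hvv, h0, mul_zero]
      have key1 : H *ᵥ (Q *ᵥ x) = x := by
        rw [hH, reflR_mulVec]
        have hvQx : v ⬝ᵥ (Q *ᵥ x) = x ⬝ᵥ x - x ⬝ᵥ (Q *ᵥ x) := by
          rw [hv, sub_dotProduct, hdot x x, dotProduct_comm x (Q *ᵥ x)]
        rw [hvQx, hvv]
        have hcoef : 2 / (2 * (x ⬝ᵥ x - x ⬝ᵥ (Q *ᵥ x))) * (x ⬝ᵥ x - x ⬝ᵥ (Q *ᵥ x)) = 1 := by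
          field_simp
        rw [hcoef, one_smul, hv, sub_sub_cancel]
      have key2 : ∀ y, Q *ᵥ y = y → H *ᵥ y = y := by
        intro y hy
        rw [hH, reflR_mulVec]
        have hzero : v ⬝ᵥ y = 0 := by
          rw [hv, sub_dotProduct]
          have h2 : (Q *ᵥ x) ⬝ᵥ y = x ⬝ᵥ y := by
            calc (Q *ᵥ x) ⬝ᵥ y = (Q *ᵥ x) ⬝ᵥ (Q *ᵥ y) := by rw [hy]
              _ = x ⬝ᵥ y := hdot x y
          rw [h2, sub_self]
        rw [hzero, mul_zero, zero_smul, sub_zero]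
      have hsub : LinearMap.ker (Q - 1).mulVecLin < LinearMap.ker ((H * Q) - 1).mulVecLin := by
        rw [SetLike.lt_iff_le_and_exists]
        refine ⟨fun y hy => mem_fix.mpr ?_, x, mem_fix.mpr ?_, fun hx' => hx (mem_fix.mp hx')⟩
        · have hy' := mem_fix.mp hy
          rw [← Matrix.mulVec_mulVec, hy', key2 y hy']
        · rw [← Matrix.mulVec_mulVec, key1]
      have hrank' : n ≤ m + Module.finrank ℝ (LinearMap.ker ((H * Q) - 1).mulVecLin) := by
        have := Submodule.finrank_lt_finrank_of_lt hsub
        omega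
      obtain ⟨L, hlen, hnz, hprod⟩ := ih (H * Q) hHQ hrank'
      refine ⟨v :: L, by simpa using hlen, ?_, ?_⟩
      · intro u hu
        rcases List.mem_cons.mp hu with h | h
        · rw [h]; exact hv0
        · exact hnz u h
      · have hQHQ : Q = H * (H * Q) := by rw [← mul_assoc, hHH, one_mul]
        rw [List.map_cons, List.prod_cons, ← hprod, ← hH, ← hQHQ]

lemma cartan_dieudonne {Q : Matrix (Fin n) (Fin n) ℝ} (hQ : Qᵀ * Q = 1) :
    ∃ L : List (Fin n → ℝ), L.length ≤ n ∧ (∀ v ∈ L, v ≠ 0) ∧ Q = (L.map reflR).prod :=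
  cd_aux n Q hQ (Nat.le_add_right n _)

lemma det_prod_refl (l : List (Fin n → ℝ)) (h : ∀ v ∈ l, v ≠ 0) :
    ((l.map reflR).prod).det = (-1 : ℝ) ^ l.length := by
  induction l with
  | nil => simp
  | cons a t ih =>
    simp only [List.map_cons, List.prod_cons, det_mul, List.length_cons]
    rw [reflR_det (h a (List.mem_cons_self)),
      ih fun u hu => h u (List.mem_cons_of_mem a hu), pow_succ]
    ring

end CD
section spectral

open Polynomial

variable {n : ℕ}

lemma diagonal_submatrix (μ : Fin n → ℝ) (σ : Equiv.Perm (Fin n)) :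
    (diagonal μ).submatrix σ σ = diagonal (μ ∘ σ) := by
  ext a b
  rcases eq_or_ne a b with h | h
  · subst h; simp
  · rw [Matrix.submatrix_apply, diagonal_apply_ne _ (fun hc => h (σ.injective hc)),
      diagonal_apply_ne _ h]

lemma spectral_step {i0 i1 : Fin n} (h01 : i0 ≠ i1) {A : Matrix (Fin n) (Fin n) ℝ}
    (hA : A ∈ discSurface n) :
    ∃ (Q : Matrix (Fin n) (Fin n) ℝ) (ν : Fin n → ℝ), Qᵀ * Q = 1 ∧ Q.det = 1 ∧ ν i0 = ν i1 ∧
      A = Q * diagonal ν * Qᵀ := by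
  obtain ⟨hsym, c, hc⟩ := hA
  have hherm : A.IsHermitian := by
    rwa [Matrix.IsHermitian, Matrix.conjTranspose_eq_transpose_of_trivial]
  set U : Matrix (Fin n) (Fin n) ℝ := (hherm.eigenvectorUnitary : Matrix (Fin n) (Fin n) ℝ) with hUdef
  set μ : Fin n → ℝ := hherm.eigenvalues with hμdef
  have hU1 : U * Uᵀ = 1 := by
    have h := (Matrix.mem_unitaryGroup_iff).mp (hherm.eigenvectorUnitary).2
    rwa [Matrix.star_eq_conjTranspose, Matrix.conjTranspose_eq_transpose_of_trivial] at h
  have hU2 : Uᵀ * U = 1 := mul_eq_one_comm.mp hU1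
  have hspec : A = U * diagonal μ * Uᵀ := by
    have h := hherm.spectral_theorem
    rw [Unitary.conjStarAlgAut_apply, Matrix.star_eq_conjTranspose,
      Matrix.conjTranspose_eq_transpose_of_trivial] at h
    have hco : (RCLike.ofReal ∘ μ : Fin n → ℝ) = μ := by
      funext i; simp
    rwa [hco] at h
  -- charpoly of A
  have hcp : A.charpoly = ∏ i, (X - C (μ i)) := by
    rw [hspec, charpoly_conj _ _ hU1, charpoly_diagonal]
  -- extract two equal eigenvalues
  have hprodform : (∏ i, (X - C (μ i)))
      = ((Finset.univ.val.map μ).map fun a => X - C a).prod := by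
    rw [Multiset.map_map]
    rfl
  have hmonic : (∏ i, (X - C (μ i))).Monic :=
    Polynomial.monic_prod_of_monic _ _ fun i _ => Polynomial.monic_X_sub_C (μ i)
  have hne : (∏ i, (X - C (μ i))) ≠ 0 := hmonic.ne_zero
  have hdvd : (X - C c) ^ 2 ∣ ∏ i, (X - C (μ i)) := by rwa [hcp] at hc
  have hcount : 2 ≤ (Finset.univ.val.map μ).count c := by
    have h2 : 2 ≤ Polynomial.rootMultiplicity c (∏ i, (X - C (μ i))) :=
      (Polynomial.le_rootMultiplicity_iff hne).mpr hdvd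
    have h3 : (∏ i, (X - C (μ i))).roots = Finset.univ.val.map μ := by
      rw [hprodform, Polynomial.roots_multiset_prod_X_sub_C]
    rw [← Polynomial.count_roots, h3] at h2
    exact h2
  have hcard : 1 < (Finset.univ.filter fun i => μ i = c).card := by
    have h4 : (Finset.univ.val.map μ).count c
        = Multiset.card (Finset.univ.val.filter fun i => c = μ i) := Multiset.count_map _ _ _
    have h5 : (Finset.univ.filter fun i => μ i = c).card
        = Multiset.card (Finset.univ.val.filter fun i => c = μ i) := by
      rw [Finset.card_def, Finset.filter_val]
      congr 1
      exact Multiset.filter_congr fun i _ => by constructor <;> (intro h; exact h.symm)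
    omega
  obtain ⟨i, hi, j, hj, hij⟩ := Finset.one_lt_card.mp hcard
  rw [Finset.mem_filter] at hi hj
  -- permutation sending i0 ↦ i, i1 ↦ j
  have hji : j ≠ Equiv.swap i0 i i0 := by rw [Equiv.swap_apply_left]; exact hij.symm
  set j' := (Equiv.swap i0 i).symm j with hj'def
  have hj'0 : j' ≠ i0 := by
    intro h
    apply hij
    have hthis : j = Equiv.swap i0 i j' := by rw [hj'def, Equiv.apply_symm_apply]
    rw [h, Equiv.swap_apply_left] at hthis
    exact hthis.symm
  set σ : Equiv.Perm (Fin n) := Equiv.trans (Equiv.swap i1 j') (Equiv.swap i0 i) with hσ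
  have hσ0 : σ i0 = i := by
    rw [hσ, Equiv.trans_apply, Equiv.swap_apply_of_ne_of_ne h01 (Ne.symm hj'0),
      Equiv.swap_apply_left]
  have hσ1 : σ i1 = j := by
    rw [hσ, Equiv.trans_apply, Equiv.swap_apply_left, hj'def, Equiv.apply_symm_apply]
  set ν := μ ∘ σ with hν
  set Q1 := U.submatrix id σ with hQ1
  have hQ1orth : Q1ᵀ * Q1 = 1 := by
    rw [hQ1, transpose_submatrix, ← Matrix.submatrix_mul _ _ _ _ _ Function.bijective_id, hU2,
      Matrix.submatrix_one_equiv]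
  have hQ1conj : Q1 * diagonal ν * Q1ᵀ = A := by
    rw [hQ1, transpose_submatrix, hν, ← diagonal_submatrix,
      ← Matrix.submatrix_mul _ _ id σ σ σ.bijective,
      ← Matrix.submatrix_mul _ _ id σ id σ.bijective, Matrix.submatrix_id_id, hspec]
  have hdet2 : Q1.det * Q1.det = 1 := by
    have := congrArg Matrix.det hQ1orth
    rwa [det_mul, det_transpose, det_one] at this
  set ε : Fin n → ℝ := fun i => if i = i0 then Q1.det else 1 with hε
  have hεsq : ∀ i, ε i * ε i = 1 := by
    intro i
    rw [hε]
    rcases eq_or_ne i i0 with h | h <;> simp [h, hdet2]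
  set Q := Q1 * diagonal ε with hQdef
  have hdd1 : diagonal ε * diagonal ε = (1 : Matrix (Fin n) (Fin n) ℝ) := by
    rw [diagonal_mul_diagonal]
    have h9 : (fun i => ε i * ε i) = fun _ => (1 : ℝ) := funext hεsq
    rw [h9, diagonal_one]
  have hQorth : Qᵀ * Q = 1 := by
    rw [hQdef, transpose_mul, diagonal_transpose, mul_assoc, ← mul_assoc Q1ᵀ, hQ1orth, one_mul,
      hdd1]
  have hdet : Q.det = 1 := by
    rw [hQdef, det_mul, det_diagonal]
    have hprodε : ∏ i, ε i = Q1.det := by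
      rw [hε]
      rw [Finset.prod_ite_eq' Finset.univ i0 fun _ => Q1.det]
      simp
    rw [hprodε]
    exact hdet2
  have hQconj : Q * diagonal ν * Qᵀ = A := by
    rw [hQdef, transpose_mul, diagonal_transpose]
    have hEDE : diagonal ε * diagonal ν * diagonal ε = diagonal ν := by
      rw [diagonal_mul_diagonal, diagonal_mul_diagonal]
      have h9 : (fun i => ε i * ν i * ε i) = ν := by
        funext i
        calc ε i * ν i * ε i = ν i * (ε i * ε i) := by ring
          _ = ν i := by rw [hεsq i, mul_one]
      rw [h9]
    have hassoc : Q1 * diagonal ε * diagonal ν * (diagonal ε * Q1ᵀ)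
        = Q1 * (diagonal ε * diagonal ν * diagonal ε) * Q1ᵀ := by
      simp only [mul_assoc]
    rw [hassoc, hEDE, hQ1conj]
  refine ⟨Q, ν, hQorth, hdet, ?_, hQconj.symm⟩
  rw [hν]
  show μ (σ i0) = μ (σ i1)
  rw [hσ0, hσ1, hi.2, hj.2]

end spectral
section main

variable {n : ℕ}

lemma surj {i0 i1 : Fin n} (h01 : i0 ≠ i1) (dd : Fin n → Fin n)
    (hdd : ∀ i, dd i = if i = i0 then i1 else i) {A : Matrix (Fin n) (Fin n) ℝ}
    (hA : A ∈ discSurface n) :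
    ∃ x : (Fin (2*n) × Fin n) ⊕ (Fin n) → ℝ,
      A = psiM (fun k l => x (Sum.inl (k, l))) (fun i => x (Sum.inr (dd i))) := by
  obtain ⟨Q, ν, hQ, hdet, hnu, hAeq⟩ := spectral_step h01 hA
  obtain ⟨L, hlen, hnz, hprod⟩ := cartan_dieudonne hQ
  have hpar : (-1 : ℝ) ^ L.length = 1 := by rw [← det_prod_refl L hnz, ← hprod, hdet]
  have heven : Even L.length := (neg_one_pow_eq_one_iff_even (by norm_num)).mp hpar
  set e0 : Fin n → ℝ := Pi.single i0 1 with he0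
  have he00 : e0 ≠ 0 := by
    intro h
    have h2 := congrFun h i0
    rw [he0, Pi.single_eq_same, Pi.zero_apply] at h2
    exact one_ne_zero h2
  set L' := L ++ List.replicate (2*n - L.length) e0 with hL'
  have hlen' : L'.length = 2*n := by
    rw [hL', List.length_append, List.length_replicate]
    omega
  have hnz' : ∀ v ∈ L', v ≠ 0 := by
    intro v hv
    rcases List.mem_append.mp hv with h | h
    · exact hnz v h
    · rw [List.eq_of_mem_replicate h]
      exact he00
  have hQ' : (L'.map reflR).prod = Q := by
    rw [hL', List.map_append, List.prod_append, ← hprod, List.map_replicate,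
      List.prod_replicate]
    have hev : Even (2*n - L.length) :=
      (Nat.even_sub (by omega : L.length ≤ 2*n)).mpr (iff_of_true (even_two_mul n) heven)
    obtain ⟨m2, hm2⟩ := hev
    rw [hm2, ← two_mul, pow_mul, pow_two, reflR_mul_self he00, one_pow, mul_one]
  set w : Fin (2*n) → Fin n → ℝ := fun k => L'.get (Fin.cast hlen'.symm k) with hw
  have hofn : List.ofFn (fun k => hh (w k)) = L'.map hh := by
    apply List.ext_getElem
    · rw [List.length_ofFn, List.length_map, hlen']
    · intro i h1 h2
      rw [List.getElem_ofFn, List.getElem_map]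
      rfl
  set s := (L'.map fun v => v ⬝ᵥ v).prod with hs
  have hspos : 0 < s := by
    refine List.prod_pos ?_
    intro a ha
    obtain ⟨v, hv, rfl⟩ := List.mem_map.mp ha
    exact dot_self_pos (hnz' v hv)
  have hN : bigN w = s • Q := by rw [bigN, hofn, prod_hh _ hnz', hQ']
  refine ⟨Sum.elim (fun kl => w kl.1 kl.2) (fun i => ν i / s^2), ?_⟩
  have hwx : (fun k l => Sum.elim (fun kl : Fin (2*n) × Fin n => w kl.1 kl.2)
      (fun i => ν i / s^2) (Sum.inl (k, l))) = w := by
    funext k l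
    rfl
  have hdx : (fun i => Sum.elim (fun kl : Fin (2*n) × Fin n => w kl.1 kl.2)
      (fun i => ν i / s^2) (Sum.inr (dd i))) = fun i => ν i / s^2 := by
    funext i
    show ν (dd i) / s^2 = ν i / s^2
    rw [hdd i]
    rcases eq_or_ne i i0 with h | h
    · rw [if_pos h, h, ← hnu]
    · rw [if_neg h]
  rw [hwx, hdx]
  have hcalc : psiM w (fun i => ν i / s ^ 2) = Q * diagonal ν * Qᵀ := by
    have h1 : ((s*s) • fun i => ν i / s ^ 2) = ν := by
      funext i
      show s * s * (ν i / s^2) = ν i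
      rw [sq]
      field_simp
    calc psiM w (fun i => ν i / s ^ 2)
        = (s • Q) * diagonal (fun i => ν i / s ^ 2) * (s • Q)ᵀ := by rw [psiM, hN]
      _ = (s * s) • (Q * diagonal (fun i => ν i / s ^ 2) * Qᵀ) := by
          rw [transpose_smul, Matrix.smul_mul, Matrix.smul_mul, Matrix.mul_smul, smul_smul]
      _ = Q * ((s*s) • diagonal (fun i => ν i / s ^ 2)) * Qᵀ := by
          rw [Matrix.mul_smul, Matrix.smul_mul]
      _ = Q * diagonal ν * Qᵀ := by rw [← diagonal_smul, h1]
  rw [hcalc, ← hAeq]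

end main

end DiscAux

theorem discSurface_vanishingIdeal_isPrime (n : ℕ) (hn : 2 ≤ n) :
    (vanishingIdealOf n (discSurface n)).IsPrime := by
  classical
  set i0 : Fin n := ⟨0, by omega⟩ with hi0
  set i1 : Fin n := ⟨1, by omega⟩ with hi1
  have h01 : i0 ≠ i1 := by
    intro h
    rw [hi0, hi1, Fin.mk.injEq] at h
    exact zero_ne_one h
  set dd : Fin n → Fin n := fun i => if i = i0 then i1 else i with hdd
  have hdd' : ∀ i, dd i = if i = i0 then i1 else i := fun i => rfl
  set Ψ : Fin n × Fin n → MvPolynomial ((Fin (2*n) × Fin n) ⊕ (Fin n)) ℝ :=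
    fun q => DiscAux.psiM (fun k l => MvPolynomial.X (Sum.inl (k, l)))
      (fun i => MvPolynomial.X (Sum.inr (dd i))) q.1 q.2 with hΨ
  set Φ : MvPolynomial (Fin n × Fin n) ℝ →ₐ[ℝ]
      MvPolynomial ((Fin (2*n) × Fin n) ⊕ (Fin n)) ℝ := MvPolynomial.aeval Ψ with hΦ
  have haev : ∀ {σ : Type} (g : σ → ℝ) (p : MvPolynomial σ ℝ),
      MvPolynomial.aeval g p = MvPolynomial.eval g p := by
    intro σ g p
    rfl
  have heval : ∀ (x : ((Fin (2*n) × Fin n) ⊕ (Fin n)) → ℝ) (p : MvPolynomial (Fin n × Fin n) ℝ),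
      MvPolynomial.eval x (Φ p) =
      MvPolynomial.eval (fun q : Fin n × Fin n =>
        DiscAux.psiM (fun k l => x (Sum.inl (k, l))) (fun i => x (Sum.inr (dd i))) q.1 q.2) p := by
    intro x p
    have h1 : (MvPolynomial.aeval x).comp Φ
        = MvPolynomial.aeval fun q => MvPolynomial.aeval x (Ψ q) := by
      rw [hΦ]
      exact MvPolynomial.comp_aeval Ψ (MvPolynomial.aeval x)
    have ha : (fun k => ⇑(MvPolynomial.eval x) ∘ (fun l =>
        MvPolynomial.X (R := ℝ) (Sum.inl (k, l)))) = (fun k l => x (Sum.inl (k, l))) := by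
      funext k l
      simp
    have hb : (⇑(MvPolynomial.eval x) ∘ (fun i => MvPolynomial.X (R := ℝ) (Sum.inr (dd i))))
        = fun i => x (Sum.inr (dd i)) := by
      funext i
      simp
    have h2 : ∀ q : Fin n × Fin n, MvPolynomial.eval x (Ψ q)
        = DiscAux.psiM (fun k l => x (Sum.inl (k, l))) (fun i => x (Sum.inr (dd i))) q.1 q.2 := by
      intro q
      have h3 : ((DiscAux.psiM (fun k l => MvPolynomial.X (R := ℝ) (Sum.inl (k, l)))
          (fun i => MvPolynomial.X (Sum.inr (dd i)))).map (MvPolynomial.eval x))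
          = DiscAux.psiM (fun k l => x (Sum.inl (k, l))) (fun i => x (Sum.inr (dd i))) := by
        rw [DiscAux.psiM_map, ha, hb]
      calc MvPolynomial.eval x (Ψ q)
          = ((DiscAux.psiM (fun k l => MvPolynomial.X (R := ℝ) (Sum.inl (k, l)))
            (fun i => MvPolynomial.X (Sum.inr (dd i)))).map (MvPolynomial.eval x)) q.1 q.2 := rfl
        _ = _ := by rw [h3]
    have h4 := AlgHom.congr_fun h1 p
    have h5 : MvPolynomial.eval x (Φ p) = MvPolynomial.aeval x (Φ p) := (haev x (Φ p)).symm
    rw [h5]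
    have h6 : (MvPolynomial.aeval x).comp Φ p = MvPolynomial.aeval x (Φ p) := rfl
    have h8 : (fun q => MvPolynomial.aeval x (Ψ q)) = fun q : Fin n × Fin n =>
        DiscAux.psiM (fun k l => x (Sum.inl (k, l))) (fun i => x (Sum.inr (dd i))) q.1 q.2 := by
      funext q
      rw [haev, h2 q]
    rw [← h6, h4, haev, h8]
  have hker : vanishingIdealOf n (discSurface n) = RingHom.ker Φ := by
    ext p
    have hmem : p ∈ vanishingIdealOf n (discSurface n) ↔
        ∀ A ∈ discSurface n, MvPolynomial.eval (fun q => A q.1 q.2) p = 0 := Iff.rfl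
    rw [hmem, RingHom.mem_ker]
    constructor
    · intro hp
      apply MvPolynomial.funext (q := 0)
      intro x
      rw [map_zero, heval x p]
      refine hp _ (DiscAux.psiM_mem hn h01 _ _ ?_)
      show x (Sum.inr (dd i0)) = x (Sum.inr (dd i1))
      have h9 : dd i0 = dd i1 := by
        rw [hdd' i0, hdd' i1, if_pos rfl, if_neg (Ne.symm h01)]
      rw [h9]
    · intro hp A hA
      obtain ⟨x, hx⟩ := DiscAux.surj h01 dd hdd' hA
      have h7 := heval x p
      rw [hp, map_zero] at h7
      rw [hx]
      exact h7.symm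
  rw [hker]
  exact RingHom.ker_isPrime Φ
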